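/- Let s ∈ (0,1), l ∈ (−2,4), h ∈ ℝ, and set a = max(0,l), b = min(4, 2+l). Suppose ζ₂, ζ₃ satisfy a < ζ₂ < ζ₃ < b, P(ζ₂) = P(ζ₃) = 0, P(p) > 0 for all p ∈ (ζ₂, ζ₃), P′(ζ₂) ≠ 0, P′(ζ₃) ≠ 0, and (h + (1−2s) − A(ζᵢ))/√(B(ζᵢ)) = −1 for i = 2 and i = 3. Then ∫_{ζ₂}^{ζ₃} arccos((h + (1−2s) − A(p))/√(B(p))) dp = π(ζ₃ − ζ₂) − ∫_{ζ₂}^{ζ₃} R_I(p)/√(P(p)) dp, where the improper integral on the right converges. (This is the integration-by-parts identity expressing the action integral 𝓘(l,h) as an elliptic integral in the case of type III level curves, for which the boundary constant C^B vanishes.) -/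

import Mathlib

open MeasureTheory

/-- `A_s^l(p) = l + 1 − p − 2s − l·s + (3/2)·s·p`. -/
noncomputable def redA (s l p : ℝ) : ℝ := l + 1 - p - 2 * s - l * s + 3 / 2 * s * p

/-- `B_s^l(p) = s²(1−s)²·p·(p−l)·(p−4)·(p−2−l)`. -/
noncomputable def redB (s l p : ℝ) : ℝ :=
  s ^ 2 * (1 - s) ^ 2 * p * (p - l) * (p - 4) * (p - 2 - l)

/-- `P_{l,h}^s(p) = B_s^l(p) − (h + (1−2s) − A_s^l(p))²`. -/
noncomputable def redP (s l h p : ℝ) : ℝ := redB s l p - (h + (1 - 2 * s) - redA s l p) ^ 2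

/-- `h₀ = l(1−s)`. -/
noncomputable def hZero (s l : ℝ) : ℝ := l * (1 - s)

/-- `h_l = s·l/2`. -/
noncomputable def hL (s l : ℝ) : ℝ := s * l / 2

/-- `h₄ = 6(s−2/3) + l(1−s)`. -/
noncomputable def hFour (s l : ℝ) : ℝ := 6 * (s - 2 / 3) + l * (1 - s)

/-- `h_{2+l} = 3(s−2/3) + s·l/2`. -/
noncomputable def hTwoL (s l : ℝ) : ℝ := 3 * (s - 2 / 3) + s * l / 2

/-- The kernel `R_I(p)` of the elliptic integral expressing the action integral. -/
noncomputable def RI (s l h p : ℝ) : ℝ :=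
  (hZero s l + hL s l - hFour s l - hTwoL s l) / 6 * p +
    (4 * h - hZero s l - hL s l - hFour s l - hTwoL s l) / 2 +
    l / 2 * (h - hL s l) / (p - l) + 2 * (h - hFour s l) / (p - 4) +
    (2 + l) / 2 * (h - hTwoL s l) / (p - 2 - l)

/-- derivative of `redB` -/
noncomputable def redBd (s l p : ℝ) : ℝ :=
  s ^ 2 * (1 - s) ^ 2 * ((p - l) * (p - 4) * (p - 2 - l) + p * (p - 4) * (p - 2 - l)
    + p * (p - l) * (p - 2 - l) + p * (p - l) * (p - 4))

lemma hasDerivAt_redB (s l p : ℝ) : HasDerivAt (fun x => redB s l x) (redBd s l p) p := by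
  have h1 : HasDerivAt (fun x : ℝ => s ^ 2 * (1 - s) ^ 2 * x) (s ^ 2 * (1 - s) ^ 2) p := by
    simpa using (hasDerivAt_id p).const_mul (s ^ 2 * (1 - s) ^ 2)
  have h2 := (hasDerivAt_id p).sub_const l
  have h3 := (hasDerivAt_id p).sub_const (4 : ℝ)
  have h4 : HasDerivAt (fun x : ℝ => x - 2 - l) 1 p := by
    simpa using ((hasDerivAt_id p).sub_const (2 : ℝ)).sub_const l
  have := ((h1.mul h2).mul h3).mul h4
  refine this.congr_deriv ?_
  unfold redBd
  simp only [id_eq, mul_one, Pi.mul_apply]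
  ring

lemma hasDerivAt_redG (s l h p : ℝ) :
    HasDerivAt (fun x => h + (1 - 2 * s) - redA s l x) (1 - 3 / 2 * s) p := by
  have heq : (fun x => h + (1 - 2 * s) - redA s l x)
      = fun x : ℝ => (1 - 3 / 2 * s) * x + (h + (1 - 2 * s) - (l + 1 - 2 * s - l * s)) := by
    funext x; unfold redA; ring
  rw [heq]
  simpa using ((hasDerivAt_id p).const_mul (1 - 3 / 2 * s)).add_const (h + (1 - 2 * s) - (l + 1 - 2 * s - l * s))

lemma hasDerivAt_redP (s l h p : ℝ) :
    HasDerivAt (redP s l h)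
      (redBd s l p - 2 * (h + (1 - 2 * s) - redA s l p) * (1 - 3 / 2 * s)) p := by
  have := (hasDerivAt_redB s l p).sub
    (((hasDerivAt_redG s l h p).pow 2))
  refine this.congr_deriv ?_
  ring

lemma key_identity (s l h p : ℝ) (h1 : p ≠ 0) (h2 : p - l ≠ 0) (h3 : p - 4 ≠ 0)
    (h4 : p - 2 - l ≠ 0) :
    p * ((h + (1 - 2 * s) - redA s l p) * redBd s l p / 2 - (1 - 3 / 2 * s) * redB s l p)
      = RI s l h p * redB s l p := by
  unfold RI redA redB redBd hZero hL hFour hTwoL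
  field_simp
  ring

/-- near a simple zero from the right, `F p ≥ c (p - a)` -/
lemma aux_left {F : ℝ → ℝ} {a b d : ℝ} (hab : a < b) (hFa : F a = 0)
    (hF : HasDerivAt F d a) (hd : d ≠ 0) (hpos : ∀ p ∈ Set.Ioo a b, 0 < F p) :
    ∃ c > 0, ∃ m ∈ Set.Ioo a b, ∀ p ∈ Set.Ioc a m, c * (p - a) ≤ F p := by
  have hslope : Filter.Tendsto (slope F a) (nhdsWithin a (Set.Ioi a)) (nhds d) :=
    (hasDerivAt_iff_tendsto_slope.1 hF).mono_left
      (nhdsWithin_mono _ (fun x hx => by simpa using (ne_of_gt hx)))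
  have hIoo : Set.Ioo a b ∈ nhdsWithin a (Set.Ioi a) := Ioo_mem_nhdsGT hab
  have hd0 : 0 ≤ d := by
    refine ge_of_tendsto hslope ?_
    filter_upwards [hIoo] with p hp
    rw [slope_def_field, hFa, sub_zero]
    exact div_nonneg (hpos p hp).le (by linarith [hp.1])
  have hdpos : 0 < d := lt_of_le_of_ne hd0 (Ne.symm hd)
  have h2 : ∀ᶠ p in nhdsWithin a (Set.Ioi a), d / 2 < slope F a p :=
    hslope.eventually (eventually_gt_nhds (by linarith))
  have h3 : {p | d / 2 < slope F a p} ∩ Set.Ioo a b ∈ nhdsWithin a (Set.Ioi a) :=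
    Filter.inter_mem h2 hIoo
  rw [mem_nhdsGT_iff_exists_Ioc_subset] at h3
  obtain ⟨u, hu, hsub⟩ := h3
  refine ⟨d / 2, by linarith, min u ((a + b) / 2), ⟨lt_min hu (by linarith), ?_⟩, ?_⟩
  · exact lt_of_le_of_lt (min_le_right _ _) (by linarith)
  · intro p hp
    have hpu : p ∈ Set.Ioc a u := ⟨hp.1, le_trans hp.2 (min_le_left _ _)⟩
    have := hsub hpu
    have hsl : d / 2 < slope F a p := this.1
    rw [slope_def_field, hFa, sub_zero] at hsl
    have hpa : 0 < p - a := by linarith [hp.1]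
    calc d / 2 * (p - a) ≤ F p / (p - a) * (p - a) := by
          apply mul_le_mul_of_nonneg_right hsl.le hpa.le
      _ = F p := by field_simp

lemma aux_right {F : ℝ → ℝ} {a b d : ℝ} (hab : a < b) (hFb : F b = 0)
    (hF : HasDerivAt F d b) (hd : d ≠ 0) (hpos : ∀ p ∈ Set.Ioo a b, 0 < F p) :
    ∃ c > 0, ∃ m ∈ Set.Ioo a b, ∀ p ∈ Set.Ico m b, c * (b - p) ≤ F p := by
  have hF' : HasDerivAt (fun x => F (a + b - x)) (-d) a := by
    have h1 : HasDerivAt (fun x : ℝ => a + b - x) (-1) a := by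
      simpa using (hasDerivAt_id a).const_sub (a + b)
    have hb' : HasDerivAt F d (a + b - a) := by
      convert hF using 2; ring
    have := hb'.comp a h1
    simpa [mul_comm, Function.comp_def] using this
  obtain ⟨c, hc, m, hm, hmain⟩ := aux_left hab (by simpa using hFb) hF' (by simpa using hd)
    (fun p hp => hpos (a + b - p) ⟨by linarith [hp.2], by linarith [hp.1]⟩)
  refine ⟨c, hc, a + b - m, ⟨by linarith [hm.2], by linarith [hm.1]⟩, ?_⟩
  intro p hp
  have := hmain (a + b - p) ⟨by linarith [hp.2], by linarith [hp.1]⟩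
  have heq : a + b - (a + b - p) = p := by ring
  rw [heq] at this
  calc c * (b - p) = c * (a + b - p - a) := by ring
    _ ≤ F p := this


/-- Integration by parts for the action integral in the type III case: with simple turning
points `ζ₂ < ζ₃` inside `(max(0,l), min(4,2+l))` at which the arccos argument equals `−1`,
the elliptic integral `∫ R_I/√P` converges and
`∫_{ζ₂}^{ζ₃} arccos((h + (1−2s) − A(p))/√(B(p))) dp = π(ζ₃ − ζ₂) − ∫_{ζ₂}^{ζ₃} R_I(p)/√(P(p)) dp`. -/
theorem action_integration_by_parts (s l h : ℝ) (hs : s ∈ Set.Ioo (0 : ℝ) 1)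
    (hl : l ∈ Set.Ioo (-2 : ℝ) 4) (ζ₂ ζ₃ : ℝ)
    (ha : max 0 l < ζ₂) (hζ : ζ₂ < ζ₃) (hb : ζ₃ < min 4 (2 + l))
    (h₂ : redP s l h ζ₂ = 0) (h₃ : redP s l h ζ₃ = 0)
    (hpos : ∀ p ∈ Set.Ioo ζ₂ ζ₃, 0 < redP s l h p)
    (hd₂ : deriv (redP s l h) ζ₂ ≠ 0) (hd₃ : deriv (redP s l h) ζ₃ ≠ 0)
    (hb₂ : (h + (1 - 2 * s) - redA s l ζ₂) / Real.sqrt (redB s l ζ₂) = -1)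
    (hb₃ : (h + (1 - 2 * s) - redA s l ζ₃) / Real.sqrt (redB s l ζ₃) = -1) :
    IntervalIntegrable (fun p => RI s l h p / Real.sqrt (redP s l h p)) volume ζ₂ ζ₃ ∧
    ∫ p in ζ₂..ζ₃, Real.arccos ((h + (1 - 2 * s) - redA s l p) / Real.sqrt (redB s l p)) =
      Real.pi * (ζ₃ - ζ₂) - ∫ p in ζ₂..ζ₃, RI s l h p / Real.sqrt (redP s l h p) := by
  have hfacts : ∀ p ∈ Set.Icc ζ₂ ζ₃, 0 < p ∧ 0 < p - l ∧ p - 4 < 0 ∧ p - 2 - l < 0 := by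
    intro p hp
    have h0l : (0 : ℝ) < ζ₂ := lt_of_le_of_lt (le_max_left 0 l) ha
    have hll : l < ζ₂ := lt_of_le_of_lt (le_max_right 0 l) ha
    have h4 : ζ₃ < 4 := lt_of_lt_of_le hb (min_le_left _ _)
    have h2l : ζ₃ < 2 + l := lt_of_lt_of_le hb (min_le_right _ _)
    obtain ⟨hp1, hp2⟩ := hp
    exact ⟨by linarith, by linarith, by linarith, by linarith⟩
  have hBpos : ∀ p ∈ Set.Icc ζ₂ ζ₃, 0 < redB s l p := by
    intro p hp
    obtain ⟨c1, c2, c3, c4⟩ := hfacts p hp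
    have heq : redB s l p = s ^ 2 * (1 - s) ^ 2 * p * (p - l) * ((p - 4) * (p - 2 - l)) := by
      unfold redB; ring
    rw [heq]
    exact mul_pos (mul_pos (mul_pos (mul_pos (pow_pos hs.1 2)
      (pow_pos (by linarith [hs.2] : (0:ℝ) < 1 - s) 2)) c1) c2)
      (mul_pos_of_neg_of_neg c3 c4)
  -- continuity facts
  have hcontB : Continuous (fun p => redB s l p) := by unfold redB; fun_prop
  have hcontG : Continuous (fun p => h + (1 - 2 * s) - redA s l p) := by unfold redA; fun_prop
  have hcontP : Continuous (redP s l h) := by unfold redP redB redA; fun_prop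
  have hcontf : ContinuousOn
      (fun p => (h + (1 - 2 * s) - redA s l p) / Real.sqrt (redB s l p)) (Set.Icc ζ₂ ζ₃) :=
    hcontG.continuousOn.div (Real.continuous_sqrt.comp hcontB).continuousOn
      (fun p hp => (Real.sqrt_pos.2 (hBpos p hp)).ne')
  have hcontRI : ContinuousOn (fun p => RI s l h p) (Set.Icc ζ₂ ζ₃) := by
    intro p hp
    obtain ⟨c1, c2, c3, c4⟩ := hfacts p hp
    apply ContinuousAt.continuousWithinAt
    unfold RI
    refine ((((continuousAt_const.mul continuousAt_id).add continuousAt_const).add ?_).add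
      ?_).add ?_
    · exact continuousAt_const.div (continuousAt_id.sub continuousAt_const) c2.ne'
    · exact continuousAt_const.div (continuousAt_id.sub continuousAt_const) (ne_of_lt c3)
    · exact continuousAt_const.div
        ((continuousAt_id.sub continuousAt_const).sub continuousAt_const) (ne_of_lt c4)
  obtain ⟨M, hM⟩ := isCompact_Icc.exists_bound_of_continuousOn hcontRI
  have hM0 : 0 ≤ M :=
    le_trans (norm_nonneg _) (hM ζ₂ ⟨le_refl _, hζ.le⟩)
  -- continuity of the integrand on the open interval
  have hcontF : ContinuousOn (fun p => RI s l h p / Real.sqrt (redP s l h p))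
      (Set.Ioo ζ₂ ζ₃) := by
    refine (hcontRI.mono Set.Ioo_subset_Icc_self).div
      ((Real.continuous_sqrt.comp hcontP).continuousOn) ?_
    exact fun p hp => (Real.sqrt_pos.2 (hpos p hp)).ne'
  -- lower bounds for P near the turning points
  have hP2 := hasDerivAt_redP s l h ζ₂
  have hP3 := hasDerivAt_redP s l h ζ₃
  obtain ⟨c₂, hc₂, m₂, hm₂, hlow₂⟩ := aux_left hζ h₂ hP2 (hP2.deriv ▸ hd₂) hpos
  obtain ⟨c₃, hc₃, m₃, hm₃, hlow₃⟩ := aux_right hζ h₃ hP3 (hP3.deriv ▸ hd₃) hpos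
  set m : ℝ := min m₂ m₃ with hm_def
  set m' : ℝ := max m₂ m₃ with hm'_def
  have hmIoo : m ∈ Set.Ioo ζ₂ ζ₃ := ⟨lt_min hm₂.1 hm₃.1, lt_of_le_of_lt (min_le_left _ _) hm₂.2⟩
  have hm'Ioo : m' ∈ Set.Ioo ζ₂ ζ₃ := ⟨lt_of_lt_of_le hm₂.1 (le_max_left _ _),
    max_lt hm₂.2 hm₃.2⟩
  have hmm' : m ≤ m' := min_le_of_left_le (le_max_left _ _)
  -- the left improper piece
  have ileft : IntervalIntegrable (fun p => RI s l h p / Real.sqrt (redP s l h p))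
      volume ζ₂ m := by
    rw [intervalIntegrable_iff_integrableOn_Ioo_of_le hmIoo.1.le]
    have hgi : IntervalIntegrable (fun x : ℝ => M / Real.sqrt c₂ * (x - ζ₂) ^ (-(1/2) : ℝ))
        volume ζ₂ m := by
      have h1 : IntervalIntegrable (fun x : ℝ => x ^ (-(1/2) : ℝ)) volume 0 (m - ζ₂) :=
        intervalIntegral.intervalIntegrable_rpow' (by norm_num)
      have h2 := (h1.comp_sub_right ζ₂).const_mul (M / Real.sqrt c₂)
      simpa using h2
    rw [intervalIntegrable_iff_integrableOn_Ioo_of_le hmIoo.1.le] at hgi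
    refine Integrable.mono' hgi
      ((hcontF.mono (Set.Ioo_subset_Ioo le_rfl hmIoo.2.le)).aestronglyMeasurable
        measurableSet_Ioo) ?_
    rw [ae_restrict_iff' measurableSet_Ioo]
    refine Filter.Eventually.of_forall ?_
    intro p hp
    have hp3 : p < ζ₃ := lt_trans hp.2 hmIoo.2
    have hplow := hlow₂ p ⟨hp.1, le_trans hp.2.le (min_le_left _ _)⟩
    have hpa : 0 < p - ζ₂ := by linarith [hp.1]
    have hsq1 : Real.sqrt (c₂ * (p - ζ₂)) ≤ Real.sqrt (redP s l h p) :=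
      Real.sqrt_le_sqrt hplow
    have hsq2 : 0 < Real.sqrt (c₂ * (p - ζ₂)) := Real.sqrt_pos.2 (mul_pos hc₂ hpa)
    have hRIb : |RI s l h p| ≤ M := hM p ⟨hp.1.le, hp3.le⟩
    calc ‖RI s l h p / Real.sqrt (redP s l h p)‖
        = |RI s l h p| / Real.sqrt (redP s l h p) := by
          rw [Real.norm_eq_abs, abs_div, abs_of_nonneg (Real.sqrt_nonneg _)]
      _ ≤ M / Real.sqrt (c₂ * (p - ζ₂)) := div_le_div₀ hM0 hRIb hsq2 hsq1
      _ = M / Real.sqrt c₂ * (p - ζ₂) ^ (-(1/2) : ℝ) := by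
          rw [Real.sqrt_mul hc₂.le, Real.rpow_neg hpa.le, ← Real.sqrt_eq_rpow]
          ring
  -- the right improper piece
  have iright : IntervalIntegrable (fun p => RI s l h p / Real.sqrt (redP s l h p))
      volume m' ζ₃ := by
    rw [intervalIntegrable_iff_integrableOn_Ioo_of_le hm'Ioo.2.le]
    have hgi : IntervalIntegrable (fun x : ℝ => M / Real.sqrt c₃ * (ζ₃ - x) ^ (-(1/2) : ℝ))
        volume m' ζ₃ := by
      have h1 : IntervalIntegrable (fun x : ℝ => x ^ (-(1/2) : ℝ)) volume (ζ₃ - m') 0 :=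
        intervalIntegral.intervalIntegrable_rpow' (by norm_num)
      have h2 := (h1.comp_sub_left ζ₃).const_mul (M / Real.sqrt c₃)
      have h3 : ζ₃ - (ζ₃ - m') = m' := by ring
      have h4 : ζ₃ - (0:ℝ) = ζ₃ := by ring
      rw [h3, h4] at h2
      exact h2
    rw [intervalIntegrable_iff_integrableOn_Ioo_of_le hm'Ioo.2.le] at hgi
    refine Integrable.mono' hgi
      ((hcontF.mono (Set.Ioo_subset_Ioo hm'Ioo.1.le le_rfl)).aestronglyMeasurable
        measurableSet_Ioo) ?_
    rw [ae_restrict_iff' measurableSet_Ioo]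
    refine Filter.Eventually.of_forall ?_
    intro p hp
    have hp2 : ζ₂ < p := lt_trans hm'Ioo.1 hp.1
    have hplow := hlow₃ p ⟨le_trans (le_max_right _ _) hp.1.le, hp.2⟩
    have hpa : 0 < ζ₃ - p := by linarith [hp.2]
    have hsq1 : Real.sqrt (c₃ * (ζ₃ - p)) ≤ Real.sqrt (redP s l h p) :=
      Real.sqrt_le_sqrt hplow
    have hsq2 : 0 < Real.sqrt (c₃ * (ζ₃ - p)) := Real.sqrt_pos.2 (mul_pos hc₃ hpa)
    have hRIb : |RI s l h p| ≤ M := hM p ⟨hp2.le, hp.2.le⟩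
    calc ‖RI s l h p / Real.sqrt (redP s l h p)‖
        = |RI s l h p| / Real.sqrt (redP s l h p) := by
          rw [Real.norm_eq_abs, abs_div, abs_of_nonneg (Real.sqrt_nonneg _)]
      _ ≤ M / Real.sqrt (c₃ * (ζ₃ - p)) := div_le_div₀ hM0 hRIb hsq2 hsq1
      _ = M / Real.sqrt c₃ * (ζ₃ - p) ^ (-(1/2) : ℝ) := by
          rw [Real.sqrt_mul hc₃.le, Real.rpow_neg hpa.le, ← Real.sqrt_eq_rpow]
          ring
  -- the middle piece
  have imid : IntervalIntegrable (fun p => RI s l h p / Real.sqrt (redP s l h p))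
      volume m m' := by
    refine (hcontF.mono ?_).intervalIntegrable_of_Icc hmm'
    exact fun p hp => ⟨lt_of_lt_of_le hmIoo.1 hp.1, lt_of_le_of_lt hp.2 hm'Ioo.2⟩
  have hIntF : IntervalIntegrable (fun p => RI s l h p / Real.sqrt (redP s l h p))
      volume ζ₂ ζ₃ := (ileft.trans imid).trans iright
  refine ⟨hIntF, ?_⟩
  -- continuity of the primitive
  have hcontw : ContinuousOn
      (fun p => p * Real.arccos ((h + (1 - 2 * s) - redA s l p) / Real.sqrt (redB s l p)))
      (Set.Icc ζ₂ ζ₃) :=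
    continuousOn_id.mul (Real.continuous_arccos.comp_continuousOn hcontf)
  -- the derivative formula on the interior
  have hw : ∀ p ∈ Set.Ioo ζ₂ ζ₃, HasDerivAt
      (fun p => p * Real.arccos ((h + (1 - 2 * s) - redA s l p) / Real.sqrt (redB s l p)))
      (Real.arccos ((h + (1 - 2 * s) - redA s l p) / Real.sqrt (redB s l p))
        + RI s l h p / Real.sqrt (redP s l h p)) p := by
    intro p hp
    have hpIcc : p ∈ Set.Icc ζ₂ ζ₃ := Set.Ioo_subset_Icc_self hp
    obtain ⟨c1, c2, c3, c4⟩ := hfacts p hpIcc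
    have hB := hBpos p hpIcc
    have hP := hpos p hp
    have hsbpos : 0 < Real.sqrt (redB s l p) := Real.sqrt_pos.2 hB
    have hsb2 : Real.sqrt (redB s l p) ^ 2 = redB s l p := Real.sq_sqrt hB.le
    have hGsq : (h + (1 - 2 * s) - redA s l p) ^ 2 < redB s l p := by
      unfold redP at hP; linarith
    have hfsq : ((h + (1 - 2 * s) - redA s l p) / Real.sqrt (redB s l p)) ^ 2 < 1 := by
      rw [div_pow, hsb2]; exact (div_lt_one hB).2 hGsq
    have habs := (sq_lt_one_iff_abs_lt_one _).1 hfsq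
    have hne1 : (h + (1 - 2 * s) - redA s l p) / Real.sqrt (redB s l p) ≠ 1 :=
      ne_of_lt (abs_lt.1 habs).2
    have hnem1 : (h + (1 - 2 * s) - redA s l p) / Real.sqrt (redB s l p) ≠ -1 :=
      ne_of_gt (abs_lt.1 habs).1
    have hsB : HasDerivAt (fun x => Real.sqrt (redB s l x))
        (redBd s l p / (2 * Real.sqrt (redB s l p))) p :=
      (hasDerivAt_redB s l p).sqrt hB.ne'
    have hf : HasDerivAt
        (fun x => (h + (1 - 2 * s) - redA s l x) / Real.sqrt (redB s l x))
        (((1 - 3 / 2 * s) * Real.sqrt (redB s l p) -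
          (h + (1 - 2 * s) - redA s l p) * (redBd s l p / (2 * Real.sqrt (redB s l p)))) /
          Real.sqrt (redB s l p) ^ 2) p :=
      (hasDerivAt_redG s l h p).div hsB hsbpos.ne'
    have harc := (Real.hasDerivAt_arccos hnem1 hne1).comp p hf
    have hwp := (hasDerivAt_id p).mul harc
    simp only [Function.comp_def, id_eq] at hwp harc
    refine hwp.congr_deriv ?_
    symm
    -- now prove the equality of the derivative values
    have hsppos : 0 < Real.sqrt (redP s l h p) := Real.sqrt_pos.2 hP
    have hsp2 : Real.sqrt (redP s l h p) ^ 2 = redP s l h p := Real.sq_sqrt hP.le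
    have hs1f : Real.sqrt (1 - ((h + (1 - 2 * s) - redA s l p) / Real.sqrt (redB s l p)) ^ 2)
        = Real.sqrt (redP s l h p) / Real.sqrt (redB s l p) := by
      have heq : 1 - ((h + (1 - 2 * s) - redA s l p) / Real.sqrt (redB s l p)) ^ 2
          = (Real.sqrt (redP s l h p) / Real.sqrt (redB s l p)) ^ 2 := by
        rw [div_pow, div_pow, hsb2, hsp2]
        unfold redP
        field_simp
      rw [heq, Real.sqrt_sq (div_nonneg (Real.sqrt_nonneg _) (Real.sqrt_nonneg _))]
    rw [hs1f]
    have hkey := key_identity s l h p c1.ne' c2.ne' (ne_of_lt c3) (ne_of_lt c4)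
    have hRIeq : RI s l h p = p * ((h + (1 - 2 * s) - redA s l p) * redBd s l p / 2 -
        (1 - 3 / 2 * s) * redB s l p) / redB s l p :=
      (eq_div_iff hB.ne').2 hkey.symm
    rw [hRIeq]
    field_simp
    linear_combination p * redBd s l p * (h + 1 - 2 * s - redA s l p) * hsb2
  -- fundamental theorem of calculus
  have hacInt : IntervalIntegrable
      (fun p => Real.arccos ((h + (1 - 2 * s) - redA s l p) / Real.sqrt (redB s l p)))
      volume ζ₂ ζ₃ :=
    ((Real.continuous_arccos.comp_continuousOn hcontf).intervalIntegrable_of_Icc hζ.le)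
  have hFTC := intervalIntegral.integral_eq_sub_of_hasDerivAt_of_le hζ.le hcontw hw
    (hacInt.add hIntF)
  rw [intervalIntegral.integral_add hacInt hIntF] at hFTC
  rw [hb₂, hb₃, Real.arccos_neg_one] at hFTC
  have hring : Real.pi * (ζ₃ - ζ₂) = ζ₃ * Real.pi - ζ₂ * Real.pi := by ring
  linarith [hFTC]
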